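/- Fix a < b with a < b. The map μ ↦ F_{μ,σ²}^{[a,b]}(x) is strictly decreasing in μ for each fixed x ∈ (a, b) and σ > 0, where F_{μ,σ²}^{[a,b]} is the CDF of the normal distribution N(μ,σ²) truncated to [a,b]. -/

import Mathlib

open MeasureTheory ProbabilityTheory

/-- The CDF `Φ` of the standard normal distribution. -/
noncomputable def stdNormalCDF : ℝ → ℝ := fun x => ProbabilityTheory.cdf (gaussianReal 0 1) x

/-- The CDF of the truncated normal distribution `TN(μ, σ², a, b)`. -/
noncomputable def truncNormalCDF (μ σ a b x : ℝ) : ℝ :=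
  (stdNormalCDF ((x - μ) / σ) - stdNormalCDF ((a - μ) / σ)) /
    (stdNormalCDF ((b - μ) / σ) - stdNormalCDF ((a - μ) / σ))

namespace TruncAux

noncomputable def φ : ℝ → ℝ := gaussianPDFReal 0 1

lemma φ_pos (s : ℝ) : 0 < φ s := gaussianPDFReal_pos 0 1 s one_ne_zero

lemma φ_cont : Continuous φ := by
  rw [φ, gaussianPDFReal_def]
  fun_prop

lemma key_le {u v t1 t2 : ℝ} (huv : v ≤ u) (ht : t1 ≤ t2) :
    φ (u + t2) * φ (v + t1) ≤ φ (u + t1) * φ (v + t2) := by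
  simp only [φ, gaussianPDFReal, sub_zero, NNReal.coe_one, mul_one]
  rw [mul_mul_mul_comm, ← Real.exp_add, mul_mul_mul_comm, ← Real.exp_add]
  have hK : (0:ℝ) ≤ (Real.sqrt (2 * Real.pi))⁻¹ * (Real.sqrt (2 * Real.pi))⁻¹ := by positivity
  refine mul_le_mul_of_nonneg_left (Real.exp_le_exp.2 ?_) hK
  nlinarith [mul_nonneg (sub_nonneg.2 huv) (sub_nonneg.2 ht)]

lemma key_lt {u v t1 t2 : ℝ} (huv : v < u) (ht : t1 < t2) :
    φ (u + t2) * φ (v + t1) < φ (u + t1) * φ (v + t2) := by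
  simp only [φ, gaussianPDFReal, sub_zero, NNReal.coe_one, mul_one]
  rw [mul_mul_mul_comm, ← Real.exp_add, mul_mul_mul_comm, ← Real.exp_add]
  have hK : (0:ℝ) < (Real.sqrt (2 * Real.pi))⁻¹ * (Real.sqrt (2 * Real.pi))⁻¹ := by positivity
  refine mul_lt_mul_of_pos_left (Real.exp_lt_exp.2 ?_) hK
  nlinarith [mul_pos (sub_pos.2 huv) (sub_pos.2 ht)]

lemma Phi_sub {c d : ℝ} (h : c ≤ d) :
    stdNormalCDF d - stdNormalCDF c = ∫ s in c..d, φ s := by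
  have hmeas : gaussianReal 0 1 (Set.Iic d)
      = gaussianReal 0 1 (Set.Iic c) + gaussianReal 0 1 (Set.Ioc c d) := by
    rw [← measure_union (Set.Iic_disjoint_Ioc le_rfl) measurableSet_Ioc,
      Set.Iic_union_Ioc_eq_Iic h]
  have hfin1 : gaussianReal 0 1 (Set.Iic c) ≠ ⊤ := measure_ne_top _ _
  have hfin2 : gaussianReal 0 1 (Set.Ioc c d) ≠ ⊤ := measure_ne_top _ _
  have h1 : stdNormalCDF d - stdNormalCDF c = (gaussianReal 0 1 (Set.Ioc c d)).toReal := by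
    simp only [stdNormalCDF, cdf_eq_real, measureReal_def]
    rw [hmeas, ENNReal.toReal_add hfin1 hfin2]
    ring
  rw [h1, gaussianReal_apply_eq_integral 0 one_ne_zero,
    ENNReal.toReal_ofReal (setIntegral_nonneg measurableSet_Ioc
      (fun s _ => gaussianPDFReal_nonneg 0 1 s)),
    intervalIntegral.integral_of_le h]
  rfl

lemma Phi_sub' (c d t : ℝ) (h : c ≤ d) :
    stdNormalCDF (d + t) - stdNormalCDF (c + t) = ∫ v in c..d, φ (v + t) := by
  rw [Phi_sub (by linarith), intervalIntegral.integral_comp_add_right]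

lemma Phi_sub_pos (c d t : ℝ) (h : c < d) :
    0 < stdNormalCDF (d + t) - stdNormalCDF (c + t) := by
  rw [Phi_sub' c d t h.le]
  exact intervalIntegral.intervalIntegral_pos_of_pos
    ((φ_cont.comp (continuous_id.add continuous_const)).intervalIntegrable c d)
    (fun s => φ_pos _) h

lemma step1 {a' x' t1 t2 : ℝ} (h : a' < x') (ht : t1 < t2) :
    (stdNormalCDF (x' + t1) - stdNormalCDF (a' + t1)) * φ (x' + t2) <
      (stdNormalCDF (x' + t2) - stdNormalCDF (a' + t2)) * φ (x' + t1) := by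
  rw [Phi_sub' _ _ _ h.le, Phi_sub' _ _ _ h.le, ← intervalIntegral.integral_mul_const,
    ← intervalIntegral.integral_mul_const]
  refine intervalIntegral.integral_lt_integral_of_continuousOn_of_le_of_exists_lt h
    ?_ ?_ (fun v _ => ?_) ⟨a', Set.left_mem_Icc.2 h.le, ?_⟩
  · exact ((φ_cont.comp (continuous_id.add continuous_const)).mul continuous_const).continuousOn
  · exact ((φ_cont.comp (continuous_id.add continuous_const)).mul continuous_const).continuousOn
  · have := key_le (u := x') (v := v) (by simpa using (Set.mem_Ioc.1 ‹v ∈ Set.Ioc a' x'›).2) ht.le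
    nlinarith [this]
  · have := key_lt (u := x') (v := a') h ht
    nlinarith [this]

lemma step2 {x' b' t1 t2 : ℝ} (h : x' ≤ b') (ht : t1 ≤ t2) :
    (stdNormalCDF (b' + t2) - stdNormalCDF (x' + t2)) * φ (x' + t1) ≤
      (stdNormalCDF (b' + t1) - stdNormalCDF (x' + t1)) * φ (x' + t2) := by
  rw [Phi_sub' _ _ _ h, Phi_sub' _ _ _ h, ← intervalIntegral.integral_mul_const,
    ← intervalIntegral.integral_mul_const]
  refine intervalIntegral.integral_mono_on h
    (((φ_cont.comp (continuous_id.add continuous_const)).mul continuous_const).intervalIntegrable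
      _ _)
    (((φ_cont.comp (continuous_id.add continuous_const)).mul continuous_const).intervalIntegrable
      _ _)
    (fun u hu => ?_)
  have := key_le (u := u) (v := x') hu.1 ht
  nlinarith [this]

lemma cross {a' x' b' t1 t2 : ℝ} (h1 : a' < x') (h2 : x' < b') (ht : t1 < t2) :
    (stdNormalCDF (b' + t2) - stdNormalCDF (x' + t2)) *
        (stdNormalCDF (x' + t1) - stdNormalCDF (a' + t1)) <
      (stdNormalCDF (b' + t1) - stdNormalCDF (x' + t1)) *
        (stdNormalCDF (x' + t2) - stdNormalCDF (a' + t2)) := by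
  have hA2 : 0 < stdNormalCDF (x' + t2) - stdNormalCDF (a' + t2) := Phi_sub_pos _ _ _ h1
  have hB2 : 0 < stdNormalCDF (b' + t2) - stdNormalCDF (x' + t2) := Phi_sub_pos _ _ _ h2
  have hφ1 : 0 < φ (x' + t1) := φ_pos _
  have hφ2 : 0 < φ (x' + t2) := φ_pos _
  have s1 := step1 h1 ht
  have s2 := step2 h2.le ht.le
  have hmul : (stdNormalCDF (b' + t2) - stdNormalCDF (x' + t2)) *
      (stdNormalCDF (x' + t1) - stdNormalCDF (a' + t1)) * φ (x' + t2) <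
      (stdNormalCDF (b' + t1) - stdNormalCDF (x' + t1)) *
      (stdNormalCDF (x' + t2) - stdNormalCDF (a' + t2)) * φ (x' + t2) := by
    nlinarith [mul_lt_mul_of_pos_left s1 hB2, mul_le_mul_of_nonneg_left s2 hA2.le]
  exact lt_of_mul_lt_mul_right hmul hφ2.le

end TruncAux

/-- for fixed `x ∈ (a,b)` and `σ > 0`, the truncated normal CDF
`μ ↦ F_{μ,σ²}^{[a,b]}(x)` is strictly decreasing in the mean parameter `μ`. -/
theorem truncNormalCDF_strictAnti_in_mean
    (a b σ x : ℝ) (hab : a < b) (hσ : 0 < σ) (hx : x ∈ Set.Ioo a b) :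
    StrictAnti (fun μ : ℝ => truncNormalCDF μ σ a b x) := by
  obtain ⟨hax, hxb⟩ := hx
  intro μ1 μ2 hμ
  have h1 : a / σ < x / σ := by
    have := mul_lt_mul_of_pos_right hax (inv_pos.2 hσ)
    simpa [div_eq_mul_inv] using this
  have h2 : x / σ < b / σ := by
    have := mul_lt_mul_of_pos_right hxb (inv_pos.2 hσ)
    simpa [div_eq_mul_inv] using this
  have ht : -μ2 / σ < -μ1 / σ := by
    have := mul_lt_mul_of_pos_right (neg_lt_neg hμ) (inv_pos.2 hσ)
    simpa [div_eq_mul_inv] using this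
  set t1 := -μ1 / σ
  set t2 := -μ2 / σ
  have harg : ∀ y μ : ℝ, (y - μ) / σ = y / σ + -μ / σ := fun y μ => by ring
  simp only [truncNormalCDF, harg]
  have hD1 : 0 < stdNormalCDF (b / σ + t1) - stdNormalCDF (a / σ + t1) :=
    TruncAux.Phi_sub_pos _ _ _ (h1.trans h2)
  have hD2 : 0 < stdNormalCDF (b / σ + t2) - stdNormalCDF (a / σ + t2) :=
    TruncAux.Phi_sub_pos _ _ _ (h1.trans h2)
  rw [div_lt_div_iff₀ hD2 hD1]
  nlinarith [TruncAux.cross h1 h2 ht]
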